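/- Let m, n be real numbers with m > 0, n > 0 and 2n − m > 0, and let a, b > 0. Then ∫_1^∞ ((t^n + a)(t^n + b))^{−1/m} dt = (m/(2n−m)) · F_1((2n−m)/(mn); 1/m, 1/m; (2n−m+mn)/(mn) | −a, −b). -/

import Mathlib

open MeasureTheory

noncomputable def lauricellaFD (n : ℕ) (a : ℂ) (b : Fin n → ℂ) (c : ℂ) (x : Fin n → ℂ) : ℂ :=
  (Complex.Gamma c / (Complex.Gamma a * Complex.Gamma (c - a))) *
    ∫ u in (0:ℝ)..1, (u : ℂ) ^ (a - 1) * ((1 : ℂ) - u) ^ (c - a - 1) *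
      ∏ k, ((1 : ℂ) - x k * u) ^ (-(b k))

noncomputable def appellF1 (a b₁ b₂ c x₁ x₂ : ℂ) : ℂ :=
  lauricellaFD 2 a ![b₁, b₂] c ![x₁, x₂]

noncomputable def ellipticK (k : ℝ) : ℝ :=
  ∫ θ in (0:ℝ)..(Real.pi/2), (1 - k ^ 2 * Real.sin θ ^ 2) ^ (-(1:ℝ)/2)

open Real Set in
private lemma goursat_subst (m n : ℝ) (hm : 0 < m) (hn : 0 < n) (hmn : 0 < 2 * n - m)
    (a b : ℝ) (ha : 0 < a) (hb : 0 < b) :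
    (∫ t in Set.Ioi (1:ℝ), ((t ^ n + a) * (t ^ n + b)) ^ (-1 / m) : ℝ) =
      (1/n) * ∫ u in Set.Ioo (0:ℝ) 1,
        u ^ ((2*n - m)/(m*n) - 1) * (1 + a*u) ^ (-1/m) * (1 + b*u) ^ (-1/m) := by
  have hn' : n ≠ 0 := ne_of_gt hn
  have hm' : m ≠ 0 := ne_of_gt hm
  have hneg : -1/n < 0 := div_neg_of_neg_of_pos (by norm_num) hn
  set f : ℝ → ℝ := fun u => u ^ (-1/n) with hf
  have himg : f '' Ioo 0 1 = Ioi 1 := by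
    ext t
    constructor
    · rintro ⟨u, ⟨hu0, hu1⟩, rfl⟩
      have : (1:ℝ) < u ^ (-1/n) := by
        rw [Real.one_lt_rpow_iff_of_pos hu0]
        exact Or.inr ⟨hu1, hneg⟩
      exact this
    · intro ht
      have ht : (1:ℝ) < t := ht
      have ht0 : (0:ℝ) < t := lt_trans one_pos ht
      refine ⟨t ^ (-n), ⟨Real.rpow_pos_of_pos ht0 _, ?_⟩, ?_⟩
      · exact Real.rpow_lt_one_of_one_lt_of_neg ht (by linarith)
      · show (t ^ (-n)) ^ (-1/n) = t
        rw [← Real.rpow_mul ht0.le]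
        rw [show (-n) * (-1/n) = 1 by field_simp]
        exact Real.rpow_one t
  have hderiv : ∀ x ∈ Ioo (0:ℝ) 1,
      HasDerivWithinAt f ((-1/n) * x ^ (-1/n - 1)) (Ioo 0 1) x := by
    intro x hx
    exact (Real.hasDerivAt_rpow_const (Or.inl (ne_of_gt hx.1))).hasDerivWithinAt
  have hinj : InjOn f (Ioo (0:ℝ) 1) := by
    intro x hx y hy hxy
    exact Real.rpow_left_injOn (ne_of_lt hneg) hx.1.le hy.1.le hxy
  rw [← himg, integral_image_eq_integral_abs_deriv_smul measurableSet_Ioo hderiv hinj]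
  rw [← integral_const_mul]
  apply setIntegral_congr_fun measurableSet_Ioo
  intro u hu
  obtain ⟨hu0, hu1⟩ := hu
  have hfu : f u ^ n = u⁻¹ := by
    show (u ^ (-1/n)) ^ n = u⁻¹
    rw [← Real.rpow_mul hu0.le, show (-1/n) * n = -1 by field_simp, Real.rpow_neg_one]
  have h1a : (0:ℝ) < 1 + a*u := by nlinarith
  have h1b : (0:ℝ) < 1 + b*u := by nlinarith
  have hfa : f u ^ n + a = (1 + a*u) / u := by rw [hfu]; field_simp
  have hfb : f u ^ n + b = (1 + b*u) / u := by rw [hfu]; field_simp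
  have habs : |(-1/n) * u ^ (-1/n - 1)| = (1/n) * u ^ (-1/n - 1) := by
    rw [abs_mul, abs_of_neg hneg, abs_of_pos (Real.rpow_pos_of_pos hu0 _)]
    ring
  have huu : u * u = u ^ (2:ℝ) := by
    rw [show ((2:ℝ)) = ((2:ℕ):ℝ) by norm_num, Real.rpow_natCast]; ring
  have key : u ^ (-1/n - 1) * u ^ (2/m) = u ^ ((2*n-m)/(m*n) - 1) := by
    rw [← Real.rpow_add hu0]; congr 1; field_simp; ring
  simp only [smul_eq_mul]
  rw [habs, hfa, hfb, div_mul_div_comm, Real.div_rpow (by positivity) (by positivity),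
    Real.mul_rpow h1a.le h1b.le, huu, ← Real.rpow_mul hu0.le,
    show (2:ℝ) * (-1/m) = -(2/m) by ring, Real.rpow_neg hu0.le, div_inv_eq_mul, ← key]
  ring

open Real Set in
private lemma goursat_appell (m n : ℝ) (hm : 0 < m) (hn : 0 < n) (hmn : 0 < 2 * n - m)
    (a b : ℝ) (ha : 0 < a) (hb : 0 < b) :
    appellF1 (((2 * n - m) / (m * n) : ℝ) : ℂ) ((1 / m : ℝ) : ℂ) ((1 / m : ℝ) : ℂ)
          (((2 * n - m + m * n) / (m * n) : ℝ) : ℂ) (-(a : ℂ)) (-(b : ℂ)) =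
      (((2 * n - m) / (m * n) : ℝ) : ℂ) *
        ((∫ u in Set.Ioo (0:ℝ) 1,
          u ^ ((2*n - m)/(m*n) - 1) * (1 + a*u) ^ (-1/m) * (1 + b*u) ^ (-1/m) : ℝ) : ℂ) := by
  have hn' : n ≠ 0 := ne_of_gt hn
  have hm' : m ≠ 0 := ne_of_gt hm
  set r : ℝ := (2*n - m)/(m*n) with hr
  have hrpos : 0 < r := div_pos hmn (by positivity)
  have hc : ((2*n - m + m*n)/(m*n) : ℝ) = r + 1 := by rw [hr]; field_simp
  rw [appellF1, lauricellaFD, hc]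
  push_cast
  have h1 : (r:ℂ) + 1 - r = 1 := by ring
  rw [h1, Complex.Gamma_one, mul_one]
  have hGamma : Complex.Gamma ((r:ℂ) + 1) = r * Complex.Gamma r :=
    Complex.Gamma_add_one _ (by exact_mod_cast ne_of_gt hrpos)
  have hGne : Complex.Gamma (r:ℂ) ≠ 0 := by
    apply Complex.Gamma_ne_zero_of_re_pos
    simpa using hrpos
  rw [hGamma, mul_div_assoc, div_self hGne, mul_one]
  congr 1
  have hint : ∀ u ∈ Set.uIcc (0:ℝ) 1,
      (u : ℂ) ^ ((r:ℂ) - 1) * ((1:ℂ) - u) ^ ((1:ℂ) - 1) *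
        ∏ k, ((1:ℂ) - ![-(a:ℂ), -(b:ℂ)] k * u) ^ (-(![1/(m:ℂ), 1/(m:ℂ)] k)) =
      ((u ^ (r - 1) * (1 + a*u) ^ (-1/m) * (1 + b*u) ^ (-1/m) : ℝ) : ℂ) := by
    intro u hu
    rw [Set.uIcc_of_le (by norm_num)] at hu
    obtain ⟨hu0, hu1⟩ := hu
    have h1a : (0:ℝ) ≤ 1 + a*u := by nlinarith
    have h1b : (0:ℝ) ≤ 1 + b*u := by nlinarith
    have e0 : ((1:ℂ) - 1) = 0 := by ring
    rw [e0, Complex.cpow_zero, mul_one, Fin.prod_univ_two]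
    simp only [Matrix.cons_val_zero, Matrix.cons_val_one, Matrix.head_cons]
    have ea : (1:ℂ) - (-(a:ℂ)) * u = ((1 + a*u : ℝ) : ℂ) := by push_cast; ring
    have eb : (1:ℂ) - (-(b:ℂ)) * u = ((1 + b*u : ℝ) : ℂ) := by push_cast; ring
    have em : -(1/(m:ℂ)) = ((-1/m : ℝ) : ℂ) := by push_cast; ring
    have er : ((r:ℂ) - 1) = ((r - 1 : ℝ) : ℂ) := by push_cast; ring
    rw [ea, eb, em, er, ← Complex.ofReal_cpow hu0, ← Complex.ofReal_cpow h1a,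
      ← Complex.ofReal_cpow h1b]
    push_cast
    ring
  rw [intervalIntegral.integral_congr hint, intervalIntegral.integral_ofReal,
    intervalIntegral.integral_of_le (by norm_num : (0:ℝ) ≤ 1),
    integral_Ioc_eq_integral_Ioo]

theorem goursat_lemma1 (m n : ℝ) (hm : 0 < m) (hn : 0 < n) (hmn : 0 < 2 * n - m)
    (a b : ℝ) (ha : 0 < a) (hb : 0 < b) :
    ((∫ t in Set.Ioi (1:ℝ), ((t ^ n + a) * (t ^ n + b)) ^ (-1 / m) : ℝ) : ℂ) =
      ((m / (2 * n - m) : ℝ) : ℂ) *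
        appellF1 (((2 * n - m) / (m * n) : ℝ) : ℂ) ((1 / m : ℝ) : ℂ) ((1 / m : ℝ) : ℂ)
          (((2 * n - m + m * n) / (m * n) : ℝ) : ℂ) (-(a : ℂ)) (-(b : ℂ)) := by
  rw [goursat_subst m n hm hn hmn a b ha hb, goursat_appell m n hm hn hmn a b ha hb]
  have hcoef : (m / (2 * n - m)) * ((2 * n - m) / (m * n)) = 1/n := by
    field_simp
  push_cast
  rw [← mul_assoc]
  norm_cast
  rw [← hcoef]; push_cast; ring
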